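/- Let d ≥ 1 and let τ_V be the Vietoris topology on the collection of all closed subsets of ℝ^d, i.e. the topology generated by the sets {F closed : F ⊆ U} and {F closed : F ∩ U ≠ ∅} for U ranging over the open subsets of ℝ^d. Then no countable family of subsets of this hyperspace is a pseudobase for τ_V. In particular, the hyperspace of closed subsets of ℝ^d with the Vietoris topology is not second countable. -/

import Mathlib

open Topology

/-- The type of closed subsets of `ℝ^d`. -/
def ClosedSubsets (d : ℕ) : Type :=
  {F : Set (EuclideanSpace ℝ (Fin d)) // IsClosed F}

/-- The Vietoris topology on the closed subsets of `ℝ^d`, generated by the sets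
`{F closed : F ⊆ U}` and `{F closed : F ∩ U ≠ ∅}` for `U` open. -/
def vietoris (d : ℕ) : TopologicalSpace (ClosedSubsets d) :=
  TopologicalSpace.generateFrom
    ({S | ∃ U : Set (EuclideanSpace ℝ (Fin d)), IsOpen U ∧ S = {F : ClosedSubsets d | F.1 ⊆ U}} ∪
     {S | ∃ U : Set (EuclideanSpace ℝ (Fin d)), IsOpen U ∧
        S = {F : ClosedSubsets d | (F.1 ∩ U).Nonempty}})

/-- A family `B` of subsets of a topological space `(X, τ)` is a pseudobase if for every
open `U`, every `x ∈ U` and every sequence `y` converging to `x`, there are `P ∈ B` and `n₀`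
with `{x} ∪ {y n : n ≥ n₀} ⊆ P ⊆ U`. -/
def IsPseudobase {X : Type*} (τ : TopologicalSpace X) (B : Set (Set X)) : Prop :=
  ∀ U : Set X, IsOpen[τ] U → ∀ x ∈ U, ∀ y : ℕ → X,
    Filter.Tendsto y Filter.atTop (@nhds X τ x) →
    ∃ P ∈ B, ∃ n₀ : ℕ, ({x} ∪ {z | ∃ n ≥ n₀, z = y n}) ⊆ P ∧ P ⊆ U

section Aux

variable (d : ℕ) (hd : 1 ≤ d)

noncomputable def pt (hd : 1 ≤ d) (n : ℕ) : EuclideanSpace ℝ (Fin d) :=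
  (n : ℝ) • EuclideanSpace.single (⟨0, hd⟩ : Fin d) (1 : ℝ)

lemma pt_dist (hd : 1 ≤ d) (m n : ℕ) :
    dist (pt d hd m) (pt d hd n) = |(m : ℝ) - n| := by
  rw [dist_eq_norm, pt, pt, ← sub_smul, norm_smul, EuclideanSpace.norm_single]
  simp

lemma pt_injective (hd : 1 ≤ d) : Function.Injective (pt d hd) := by
  intro m n h
  have := pt_dist d hd m n
  rw [h, dist_self] at this
  have : (m : ℝ) = n := by
    have := this.symm
    rwa [abs_eq_zero, sub_eq_zero] at this
  exact_mod_cast this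

lemma isClosed_pt_image (hd : 1 ≤ d) (S : Set ℕ) : IsClosed (pt d hd '' S) := by
  apply Metric.isClosed_of_pairwise_le_dist (ε := 1) one_pos
  rintro _ ⟨m, _, rfl⟩ _ ⟨n, _, rfl⟩ hne
  have hmn : m ≠ n := fun h => hne (by rw [h])
  rw [pt_dist]
  have : (1 : ℝ) ≤ |(m : ℝ) - n| := by
    have : (m : ℤ) ≠ n := by exact_mod_cast hmn
    have h1 : (1 : ℤ) ≤ |(m : ℤ) - n| := Int.one_le_abs (sub_ne_zero.mpr this)
    calc (1:ℝ) ≤ (|(m:ℤ) - n| : ℤ) := by exact_mod_cast h1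
      _ = |(m:ℝ) - n| := by push_cast [Int.cast_abs]; ring_nf
  exact this

end Aux

lemma no_countable_pseudobase (d : ℕ) (hd : 1 ≤ d) :
    ∀ B : Set (Set (ClosedSubsets d)), B.Countable → ¬ IsPseudobase (vietoris d) B := by
    intro B hB hP
    -- points G S and open sets V S
    set G : Set ℕ → ClosedSubsets d := fun S => ⟨pt d hd '' S, isClosed_pt_image d hd S⟩ with hG
    set V : Set ℕ → Set (ClosedSubsets d) :=
      fun S => {F : ClosedSubsets d | F.1 ⊆ (pt d hd '' Sᶜ)ᶜ} with hV
    have hVopen : ∀ S, IsOpen[vietoris d] (V S) := by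
      intro S
      exact TopologicalSpace.GenerateOpen.basic _
        (Or.inl ⟨(pt d hd '' Sᶜ)ᶜ, (isClosed_pt_image d hd Sᶜ).isOpen_compl, rfl⟩)
    have hmemV : ∀ S T : Set ℕ, G T ∈ V S ↔ T ⊆ S := by
      intro S T
      constructor
      · intro h n hn
        by_contra hns
        exact h ⟨n, hn, rfl⟩ ⟨n, hns, rfl⟩
      · rintro hTS _ ⟨n, hn, rfl⟩ ⟨m, hm, hmn⟩
        exact hm (pt_injective d hd hmn ▸ hTS hn)
    have hGV : ∀ S, G S ∈ V S := fun S => (hmemV S S).mpr le_rfl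
    -- apply pseudobase with the constant sequence
    have key : ∀ S : Set ℕ, ∃ P ∈ B, G S ∈ P ∧ P ⊆ V S := by
      intro S
      obtain ⟨P, hPB, n₀, hsub, hPU⟩ :=
        hP (V S) (hVopen S) (G S) (hGV S) (fun _ => G S) (by letI := vietoris d; exact tendsto_const_nhds)
      exact ⟨P, hPB, hsub (Or.inl rfl), hPU⟩
    choose P hPB hGP hPV using key
    have hPinj : Function.Injective P := by
      intro S T hST
      have h1 : G S ∈ V T := hPV T (hST ▸ hGP S)
      have h2 : G T ∈ V S := hPV S (hST ▸ hGP T)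
      exact le_antisymm ((hmemV T S).mp h1) ((hmemV S T).mp h2)
    have : Countable (Set ℕ) := by
      have hc : (Set.range P).Countable := hB.mono (Set.range_subset_iff.mpr hPB)
      have := hc.to_subtype
      exact Countable.of_equiv _ (Equiv.ofInjective P hPinj).symm
    obtain ⟨f, hf⟩ := exists_injective_nat (Set ℕ)
    exact Function.cantor_injective f hf

/-- No countable family of subsets of the hyperspace of closed subsets of `ℝ^d` with the
Vietoris topology is a pseudobase; in particular this hyperspace is not second countable. -/
theorem stmt1 (d : ℕ) (hd : 1 ≤ d) :
    (∀ B : Set (Set (ClosedSubsets d)), B.Countable → ¬ IsPseudobase (vietoris d) B) ∧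
    ¬ @SecondCountableTopology (ClosedSubsets d) (vietoris d) := by
  refine ⟨no_countable_pseudobase d hd, ?_⟩
  intro hSC
  letI := vietoris d
  obtain ⟨b, hbc, -, hb⟩ := TopologicalSpace.exists_countable_basis (ClosedSubsets d)
  refine no_countable_pseudobase d hd b hbc ?_
  · intro U hU x hx y hy
    obtain ⟨t, htb, hxt, htU⟩ := hb.exists_subset_of_mem_open hx hU
    have ht_open : IsOpen t := hb.isOpen htb
    have : ∀ᶠ n in Filter.atTop, y n ∈ t := hy (ht_open.mem_nhds hxt)
    obtain ⟨n₀, hn₀⟩ := Filter.eventually_atTop.mp this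
    refine ⟨t, htb, n₀, ?_, htU⟩
    rintro z (rfl | ⟨n, hn, rfl⟩)
    · exact hxt
    · exact hn₀ n hn
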